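/- The polynomial p_d(x,y) (defined by s₀=2, s₁=x, s_{d+1}=x·s_d+y·s_{d-1}, p_d = s_d + (-1)^{d+1}y^d) is congruent to x^d + y^d modulo d (coefficientwise, as a polynomial over ℤ/dℤ) whenever d is prime. -/
import Mathlib


open MvPolynomial in
/-- The integer polynomial recurrence `s₀ = 2`, `s₁ = x`, `s_{d+1} = x s_d + y s_{d-1}`. -/
noncomputable def sZ : ℕ → MvPolynomial (Fin 2) ℤ
  | 0 => 2
  | 1 => MvPolynomial.X 0
  | (n + 2) => MvPolynomial.X 0 * sZ (n + 1) + MvPolynomial.X 1 * sZ n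

open MvPolynomial in
/-- `p_d = s_d + (-1)^{d+1} y^d`. -/
noncomputable def pZ (d : ℕ) : MvPolynomial (Fin 2) ℤ :=
  sZ d + (-1 : MvPolynomial (Fin 2) ℤ) ^ (d + 1) * (MvPolynomial.X 1) ^ d

open MvPolynomial in
/-- If `u + v = x 0` and `u * v = -(x 1)`, then `sZ n` evaluates to `u ^ n + v ^ n`. -/
lemma eval2_sZ {K : Type*} [CommRing K] (g : ℤ →+* K) (x : Fin 2 → K) (u v : K)
    (h1 : u + v = x 0) (h2 : u * v = -x 1) :
    ∀ n, eval₂ g x (sZ n) = u ^ n + v ^ n := by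
  intro n
  induction n using Nat.strong_induction_on with
  | _ n ih =>
    match n with
    | 0 => simp [sZ]; norm_num
    | 1 => simpa [sZ] using h1.symm
    | (n+2) =>
      simp only [sZ, eval₂_add, eval₂_mul, eval₂_X, ih (n+1) (by omega), ih n (by omega)]
      linear_combination (-(u^(n+1)+v^(n+1))) * h1 + (u^n+v^n) * h2

open MvPolynomial in
/-- For prime `d`, every coefficient of `p_d - x^d - y^d` is divisible by `d`. -/
theorem pd_congruent_mod_prime (d : ℕ) (hd : d.Prime) :
    ∀ m, (d : ℤ) ∣ (pZ d - (X 0 : MvPolynomial (Fin 2) ℤ) ^ d - (X 1) ^ d).coeff m := by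
  haveI : Fact d.Prime := ⟨hd⟩
  set K := AlgebraicClosure (ZMod d)
  haveI : CharP K d := charP_of_injective_algebraMap (algebraMap (ZMod d) K).injective d
  intro m
  rw [← CharP.intCast_eq_zero_iff K d]
  have hcoeff : ((((pZ d - (X 0 : MvPolynomial (Fin 2) ℤ) ^ d - (X 1) ^ d).coeff m : ℤ)) : K)
      = (map (Int.castRingHom K) (pZ d - (X 0 : MvPolynomial (Fin 2) ℤ) ^ d - (X 1) ^ d)).coeff m := by
    rw [coeff_map]; rfl
  rw [hcoeff]
  have hzero : map (Int.castRingHom K) (pZ d - (X 0 : MvPolynomial (Fin 2) ℤ) ^ d - (X 1) ^ d) = 0 := by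
    apply MvPolynomial.funext
    intro x
    rw [eval_map, map_zero]
    -- find roots u, v of t^2 - (x 0) t - (x 1)
    obtain ⟨u, hu⟩ := IsAlgClosed.exists_root
      (Polynomial.C 1 * Polynomial.X ^ 2 + Polynomial.C (-(x 0)) * Polynomial.X + Polynomial.C (-(x 1)))
      (by rw [Polynomial.degree_quadratic one_ne_zero]; norm_num)
    have hu' : u ^ 2 = x 0 * u + x 1 := by
      have := hu
      simp only [Polynomial.IsRoot, Polynomial.eval_add, Polynomial.eval_mul, Polynomial.eval_pow,
        Polynomial.eval_C, Polynomial.eval_X, one_mul] at this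
      linear_combination this
    set v := x 0 - u with hv
    have h1 : u + v = x 0 := by ring
    have h2 : u * v = -x 1 := by rw [hv]; linear_combination -1 * hu'
    have hs := eval2_sZ (Int.castRingHom K) x u v h1 h2 d
    simp only [pZ, eval₂_sub, eval₂_add, eval₂_mul, eval₂_pow, eval₂_X, eval₂_neg, eval₂_one, hs]
    have hfrob : (u + v) ^ d = u ^ d + v ^ d := add_pow_char (x := u) (y := v) d
    have hneg : (-1 : K) ^ (d + 1) = 1 := by
      rw [pow_succ, neg_one_pow_char K d]; ring
    rw [hneg, ← h1, hfrob]
    ring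
  rw [hzero, coeff_zero]
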